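/- For ε > 0, the function KL(ε) := ε/(e^ε − 1) − 1 − log(ε/(e^ε − 1)) satisfies 0 ≤ KL(ε) ≤ ε²/8. (Equivalently, the mean of the privacy loss of an ε-bounded-range mechanism is at most ε²/8 plus a nonpositive correction, i.e., ξ := KL(ε) − ε²/8 ≤ 0.) -/

import Mathlib

open Real

/-- If `f 0 = 0` and `f` has nonnegative derivative on `[0, ∞)`, then `f ≥ 0` there. -/
lemma nonneg_of_deriv_aux (f f' : ℝ → ℝ) (hd : ∀ x, HasDerivAt f (f' x) x)
    (h0 : f 0 = 0) (h' : ∀ x, 0 ≤ x → 0 ≤ f' x) :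
    ∀ x, 0 ≤ x → 0 ≤ f x := by
  intro x hx
  have hm : MonotoneOn f (Set.Ici (0:ℝ)) := by
    apply monotoneOn_of_deriv_nonneg (convex_Ici 0)
      (fun y _ => (hd y).continuousAt.continuousWithinAt)
      (fun y _ => (hd y).differentiableAt.differentiableWithinAt)
    intro y hy
    rw [(hd y).deriv]
    rw [interior_Ici] at hy
    exact h' y hy.le
  have := hm Set.self_mem_Ici hx hx
  rw [h0] at this
  exact this

lemma sinh_nonneg_aux {x : ℝ} (hx : 0 ≤ x) : 0 ≤ Real.sinh x := by
  simpa using Real.sinh_le_sinh.mpr hx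

lemma aux_L1 : ∀ u : ℝ, 0 ≤ u → Real.sinh u ≤ u * Real.cosh u := by
  have h := nonneg_of_deriv_aux (fun u => u * Real.cosh u - Real.sinh u)
    (fun u => u * Real.sinh u)
    (fun u => by
      have := ((hasDerivAt_id' u).mul (Real.hasDerivAt_cosh u)).sub (Real.hasDerivAt_sinh u)
      refine this.congr_deriv ?_
      ring)
    (by simp)
    (fun u hu => mul_nonneg hu (sinh_nonneg_aux hu))
  intro u hu
  have := h u hu
  linarith

lemma aux_L2 : ∀ u : ℝ, 0 ≤ u → u * Real.cosh u ≤ (1 + u ^ 2 / 3) * Real.sinh u := by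
  have h := nonneg_of_deriv_aux
    (fun u => (1 + u ^ 2 / 3) * Real.sinh u - u * Real.cosh u)
    (fun u => u / 3 * (u * Real.cosh u - Real.sinh u))
    (fun u => by
      have hp : HasDerivAt (fun u : ℝ => 1 + u ^ 2 / 3) (2 * u / 3) u := by
        have := ((hasDerivAt_pow 2 u).div_const 3).const_add 1
        refine this.congr_deriv ?_
        norm_num
      have := (hp.mul (Real.hasDerivAt_sinh u)).sub
        ((hasDerivAt_id' u).mul (Real.hasDerivAt_cosh u))
      refine this.congr_deriv ?_
      ring)
    (by simp)
    (fun u hu => by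
      have h1 := aux_L1 u hu
      have h2 : 0 ≤ u * Real.cosh u - Real.sinh u := by linarith
      positivity)
  intro u hu
  have := h u hu
  linarith

lemma cosh_le_exp_aux {x : ℝ} (hx : 0 ≤ x) : Real.cosh x ≤ Real.exp x := by
  rw [Real.cosh_eq]
  have : Real.exp (-x) ≤ Real.exp x := Real.exp_le_exp.mpr (by linarith)
  linarith

/-- Key logarithmic bound: `log (sinh u) ≤ u^2/6 + log u` for `u > 0`. -/
lemma aux_L3 : ∀ u : ℝ, 0 < u → Real.log (Real.sinh u) ≤ u ^ 2 / 6 + Real.log u := by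
  have hmono : MonotoneOn (fun u => u ^ 2 / 6 + Real.log u - Real.log (Real.sinh u))
      (Set.Ioi (0:ℝ)) := by
    have hder : ∀ u : ℝ, 0 < u →
        HasDerivAt (fun u => u ^ 2 / 6 + Real.log u - Real.log (Real.sinh u))
          (2 * u / 6 + u⁻¹ - (Real.sinh u)⁻¹ * Real.cosh u) u := by
      intro u hu
      have hs : 0 < Real.sinh u := Real.sinh_pos_iff.mpr hu
      have h1 : HasDerivAt (fun u : ℝ => u ^ 2 / 6) (2 * u / 6) u := by
        have := (hasDerivAt_pow 2 u).div_const 6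
        refine this.congr_deriv ?_
        norm_num
      have h2 : HasDerivAt Real.log u⁻¹ u := Real.hasDerivAt_log hu.ne'
      have h3 : HasDerivAt (fun u => Real.log (Real.sinh u))
          ((Real.sinh u)⁻¹ * Real.cosh u) u :=
        (Real.hasDerivAt_log hs.ne').comp u (Real.hasDerivAt_sinh u)
      exact (h1.add h2).sub h3
    apply monotoneOn_of_deriv_nonneg (convex_Ioi 0)
      (fun y hy => (hder y hy).continuousAt.continuousWithinAt)
      (fun y hy => by
        rw [interior_Ioi] at hy
        exact (hder y hy).differentiableAt.differentiableWithinAt)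
    intro y hy
    rw [interior_Ioi] at hy
    rw [(hder y hy).deriv]
    have hs : 0 < Real.sinh y := Real.sinh_pos_iff.mpr hy
    have hy0 : y ≠ 0 := ne_of_gt hy
    have h2 := aux_L2 y hy.le
    have key : (Real.sinh y)⁻¹ * Real.cosh y ≤ 2 * y / 6 + y⁻¹ := by
      have h4 : Real.cosh y ≤ (2 * y / 6 + y⁻¹) * Real.sinh y := by
        have heq : (2 * y / 6 + y⁻¹) * Real.sinh y
            = y⁻¹ * ((1 + y ^ 2 / 3) * Real.sinh y) := by
          field_simp
          ring
        rw [heq]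
        calc Real.cosh y = y⁻¹ * (y * Real.cosh y) := by field_simp
          _ ≤ y⁻¹ * ((1 + y ^ 2 / 3) * Real.sinh y) :=
              mul_le_mul_of_nonneg_left h2 (inv_nonneg.mpr hy.le)
      calc (Real.sinh y)⁻¹ * Real.cosh y
          ≤ (Real.sinh y)⁻¹ * ((2 * y / 6 + y⁻¹) * Real.sinh y) :=
            mul_le_mul_of_nonneg_left h4 (inv_nonneg.mpr hs.le)
        _ = 2 * y / 6 + y⁻¹ := by field_simp
    linarith
  -- lower bound for ψ near 0
  have hlow : ∀ a : ℝ, 0 < a →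
      -a ≤ a ^ 2 / 6 + Real.log a - Real.log (Real.sinh a) := by
    intro a ha
    have hs : 0 < Real.sinh a := Real.sinh_pos_iff.mpr ha
    have h1 : Real.sinh a ≤ a * Real.exp a := by
      calc Real.sinh a ≤ a * Real.cosh a := aux_L1 a ha.le
        _ ≤ a * Real.exp a := by
            have := cosh_le_exp_aux ha.le
            nlinarith
    have h2 : Real.log (Real.sinh a) ≤ Real.log a + a := by
      calc Real.log (Real.sinh a) ≤ Real.log (a * Real.exp a) :=
            Real.log_le_log hs h1
        _ = Real.log a + a := by rw [Real.log_mul ha.ne' (Real.exp_pos a).ne', Real.log_exp]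
    have : 0 ≤ a ^ 2 / 6 := by positivity
    linarith
  intro u hu
  have hnonneg : 0 ≤ u ^ 2 / 6 + Real.log u - Real.log (Real.sinh u) := by
    by_contra hcon
    push_neg at hcon
    set c := u ^ 2 / 6 + Real.log u - Real.log (Real.sinh u) with hc
    clear_value c
    have ha1 : 0 < min u (-c / 2) := lt_min hu (by linarith)
    have ha2 : min u (-c / 2) ≤ u := min_le_left _ _
    have hm := hmono (Set.mem_Ioi.mpr ha1) (Set.mem_Ioi.mpr hu) ha2
    dsimp only at hm
    have hl := hlow _ ha1
    have ha3 : min u (-c / 2) ≤ -c / 2 := min_le_right _ _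
    rw [← hc] at hm
    linarith
  linarith

/-- `x ≤ (1 - x/2 + x²/12)(e^x - 1)` for `x ≥ 0`. -/
lemma aux_L4 : ∀ x : ℝ, 0 ≤ x → x ≤ (1 - x / 2 + x ^ 2 / 12) * (Real.exp x - 1) := by
  have hpoly : ∀ (a b c x : ℝ),
      HasDerivAt (fun x : ℝ => a + b * x + c * x ^ 2) (b + 2 * c * x) x := by
    intro a b c x
    have hb : HasDerivAt (fun x : ℝ => b * x) b x := by
      simpa using (hasDerivAt_id' x).const_mul b
    have hc : HasDerivAt (fun x : ℝ => c * x ^ 2) (c * (2 * x)) x := by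
      have := (hasDerivAt_pow 2 x).const_mul c
      refine this.congr_deriv ?_
      norm_num
    have := (hb.const_add a).add hc
    refine this.congr_deriv ?_
    ring
  -- chain of nonnegativity
  have H2 : ∀ x : ℝ, 0 ≤ x →
      0 ≤ Real.exp x * (1/6 + (-1/6) * x + (1/12) * x ^ 2) + (-1/6) := by
    have h := nonneg_of_deriv_aux
      (fun x => Real.exp x * (1/6 + (-1/6) * x + (1/12) * x ^ 2) + (-1/6))
      (fun x => Real.exp x * (x ^ 2 / 12))
      (fun x => by
        have := ((Real.hasDerivAt_exp x).mul (hpoly (1/6) (-1/6) (1/12) x)).add_const (-1/6)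
        refine this.congr_deriv ?_
        ring)
      (by norm_num)
      (fun x hx => by positivity)
    intro x hx
    have := h x hx
    linarith
  have H1 : ∀ x : ℝ, 0 ≤ x →
      0 ≤ Real.exp x * (1/2 + (-1/3) * x + (1/12) * x ^ 2) + ((-1/2) + (-1/6) * x) := by
    have h := nonneg_of_deriv_aux
      (fun x => Real.exp x * (1/2 + (-1/3) * x + (1/12) * x ^ 2) + ((-1/2) + (-1/6) * x))
      (fun x => Real.exp x * (1/6 + (-1/6) * x + (1/12) * x ^ 2) + (-1/6))
      (fun x => by
        have := ((Real.hasDerivAt_exp x).mul (hpoly (1/2) (-1/3) (1/12) x)).add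
          ((((hasDerivAt_id' x).const_mul (-1/6 : ℝ)).const_add (-1/2)))
        refine this.congr_deriv ?_
        ring)
      (by norm_num)
      (fun x hx => H2 x hx)
    intro x hx
    have := h x hx
    linarith
  have H0 := nonneg_of_deriv_aux
    (fun x => (1 + (-1/2) * x + (1/12) * x ^ 2) * (Real.exp x - 1) - x)
    (fun x => Real.exp x * (1/2 + (-1/3) * x + (1/12) * x ^ 2) + ((-1/2) + (-1/6) * x))
    (fun x => by
      have := ((hpoly 1 (-1/2) (1/12) x).mul ((Real.hasDerivAt_exp x).sub_const 1)).sub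
        (hasDerivAt_id' x)
      refine this.congr_deriv ?_
      ring)
    (by norm_num)
    (fun x hx => H1 x hx)
  intro x hx
  have := H0 x hx
  nlinarith [this]

theorem stmt_5 (ε : ℝ) (hε : 0 < ε) :
    0 ≤ ε / (exp ε - 1) - 1 - log (ε / (exp ε - 1)) ∧
    ε / (exp ε - 1) - 1 - log (ε / (exp ε - 1)) ≤ ε ^ 2 / 8 := by
  have hE : 0 < Real.exp ε - 1 := by
    have : Real.exp 0 < Real.exp ε := Real.exp_lt_exp.mpr hε
    rw [Real.exp_zero] at this
    linarith
  have ht : 0 < ε / (Real.exp ε - 1) := div_pos hε hE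
  constructor
  · have := Real.log_le_sub_one_of_pos ht
    linarith
  · -- upper bound
    have hu : 0 < ε / 2 := by linarith
    have hs : 0 < Real.sinh (ε / 2) := Real.sinh_pos_iff.mpr hu
    have e1 : Real.exp (ε/2) * Real.exp (ε/2) = Real.exp ε := by
      rw [← Real.exp_add]; ring_nf
    have e2 : Real.exp (ε/2) * Real.exp (-(ε/2)) = 1 := by
      rw [← Real.exp_add]; simp
    have hEeq : Real.exp ε - 1 = Real.exp (ε/2) * (2 * Real.sinh (ε/2)) := by
      rw [Real.sinh_eq]
      linear_combination e2 - e1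
    have hlog1 : Real.log (Real.exp ε - 1)
        = ε/2 + Real.log 2 + Real.log (Real.sinh (ε/2)) := by
      rw [hEeq, Real.log_mul (Real.exp_pos _).ne' (by positivity),
        Real.log_exp, Real.log_mul (by norm_num) hs.ne']
      ring
    have hlog2 : Real.log (Real.sinh (ε/2)) ≤ (ε/2)^2/6 + Real.log (ε/2) :=
      aux_L3 (ε/2) hu
    have hlogε : Real.log ε = Real.log 2 + Real.log (ε/2) := by
      rw [← Real.log_mul (by norm_num) (by positivity : (ε/2:ℝ) ≠ 0)]
      congr 1
      ring
    have hkey1 : Real.log (Real.exp ε - 1) - Real.log ε ≤ ε/2 + ε^2/24 := by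
      rw [hlog1, hlogε]
      nlinarith [hlog2]
    have hkey2 : ε / (Real.exp ε - 1) ≤ 1 - ε/2 + ε^2/12 := by
      rw [div_le_iff₀ hE]
      have := aux_L4 ε hε.le
      nlinarith [this]
    have hlogt : Real.log (ε / (Real.exp ε - 1)) = Real.log ε - Real.log (Real.exp ε - 1) :=
      Real.log_div hε.ne' hE.ne'
    rw [hlogt]
    linarith
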